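/- arXiv:1804.08178 — 6 statements merged into one kernel-verified Lean document; each statement's English description precedes it below -/
import Mathlib

section
/- Let f : 2^E → ℝ≥0 be monotone submodular with f(∅)=0, let O* be an optimal solution to max{f(S) : |S| ≤ k}, and let S ⊆ E be a set such that f(S ∪ {e}) − f(S) ≤ θ/(2k) for all e ∈ E \ S, where θ ≤ f(O*). Then f(S) ≥ f(O*)/2. -/
/-- Submodular expansion bound: adding a set `A` to `S` gains at most
`|A|` times the max marginal bound `c`. -/
lemma expansion_bound {E : Type*} [Fintype E] [DecidableEq E]
    (f : Finset E → ℝ)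
    (hsub : ∀ A B : Finset E, f (A ∪ B) + f (A ∩ B) ≤ f A + f B)
    (S : Finset E) (c : ℝ) (hc : 0 ≤ c)
    (hgain : ∀ e : E, e ∉ S → f (insert e S) - f S ≤ c) :
    ∀ A : Finset E, f (S ∪ A) ≤ f S + A.card * c := by
  intro A
  induction A using Finset.induction_on with
  | empty => simp
  | @insert e A he ih =>
    rw [Finset.card_insert_of_notMem he, Nat.cast_add, Nat.cast_one]
    by_cases heS : e ∈ S ∪ A
    · have : S ∪ insert e A = S ∪ A := by
        rw [Finset.union_insert, Finset.insert_eq_self.mpr heS]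
      rw [this]
      nlinarith [ih]
    · have heS' : e ∉ S := fun h => heS (Finset.mem_union_left _ h)
      have heA : e ∉ A := fun h => heS (Finset.mem_union_right _ h)
      have hmarg := hgain e heS'
      have hsub' := hsub (S ∪ A) (insert e S)
      have h1 : (S ∪ A) ∪ insert e S = S ∪ insert e A := by
        ext x; simp [Finset.mem_union, Finset.mem_insert]; tauto
      have h2 : (S ∪ A) ∩ insert e S = S := by
        ext x
        simp only [Finset.mem_inter, Finset.mem_union, Finset.mem_insert]
        constructor
        · rintro ⟨hx1, hx2⟩
          rcases hx2 with rfl | hx2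
          · exact absurd hx1 (by tauto)
          · exact hx2
        · intro hx; exact ⟨Or.inl hx, Or.inr hx⟩
      rw [h1, h2] at hsub'
      linarith [ih]

/-- If all marginal gains over `S` are at most `θ/(2k)` with `θ ≤ f O*`,
then `f S ≥ f O* / 2`. -/
theorem stmt_4 {E : Type*} [Fintype E] [DecidableEq E]
    (f : Finset E → ℝ)
    (hnonneg : ∀ S, 0 ≤ f S)
    (hmono : ∀ A B : Finset E, A ⊆ B → f A ≤ f B)
    (hsub : ∀ A B : Finset E, f (A ∪ B) + f (A ∩ B) ≤ f A + f B)
    (hempty : f ∅ = 0) (k : ℕ) (hk : 1 ≤ k)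
    (Ostar : Finset E) (hcard : Ostar.card ≤ k)
    (hopt : ∀ T : Finset E, T.card ≤ k → f T ≤ f Ostar)
    (θ : ℝ) (hθ : θ ≤ f Ostar)
    (S : Finset E)
    (hgain : ∀ e : E, e ∉ S → f (insert e S) - f S ≤ θ / (2 * k)) :
    f S ≥ f Ostar / 2 := by
  by_cases hex : ∃ e : E, e ∉ S
  · obtain ⟨e, he⟩ := hex
    have hc : 0 ≤ θ / (2 * k) := by
      have := hgain e he
      have hmono' := hmono S (insert e S) (Finset.subset_insert e S)
      linarith
    have hbound := expansion_bound f hsub S _ hc hgain Ostar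
    have h1 : f Ostar ≤ f (S ∪ Ostar) := hmono _ _ Finset.subset_union_right
    have h2 : (Ostar.card : ℝ) * (θ / (2 * k)) ≤ (k : ℝ) * (θ / (2 * k)) := by
      apply mul_le_mul_of_nonneg_right _ hc
      exact_mod_cast hcard
    have hkpos : (0:ℝ) < k := by exact_mod_cast hk
    have h3 : (k : ℝ) * (θ / (2 * k)) = θ / 2 := by
      field_simp
    linarith
  · push_neg at hex
    have hsub' : Ostar ⊆ S := fun x _ => hex x
    have := hmono Ostar S hsub'
    have := hnonneg Ostar
    linarith
end

section
/- Let f : 2^E → ℝ≥0 be monotone submodular with f(∅)=0 and let O* be optimal for max{f(S) : |S| ≤ k}. Suppose S ⊆ E satisfies either (a) |S| = k and f(S) ≥ |S| · θ/(2k) with f(O*) ≤ (1+α)θ, or (b) f(S ∪ {e}) − f(S) < θ/(2k) for all e ∉ S with θ ≤ f(O*) ≤ (1+α)θ. Then in both cases f(S) ≥ f(O*)/(2(1+α)). -/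
lemma marg_bound {E : Type*} [DecidableEq E]
    (f : Finset E → ℝ)
    (hmono : ∀ A B : Finset E, A ⊆ B → f A ≤ f B)
    (hsub : ∀ A B : Finset E, f (A ∪ B) + f (A ∩ B) ≤ f A + f B)
    (S : Finset E) : ∀ T : Finset E,
    f (S ∪ T) ≤ f S + ∑ e ∈ T \ S, (f (insert e S) - f S) := by
  intro T
  induction T using Finset.induction with
  | empty => simp
  | @insert a T' ha ih =>
    by_cases haS : a ∈ S
    · have h1 : S ∪ insert a T' = S ∪ T' := by
        ext x; simp only [Finset.mem_union, Finset.mem_insert]; aesop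
      have h2 : insert a T' \ S = T' \ S := by
        ext x; simp only [Finset.mem_sdiff, Finset.mem_insert]; aesop
      rw [h1, h2]; exact ih
    · have h2 : insert a T' \ S = insert a (T' \ S) := by
        ext x; simp only [Finset.mem_sdiff, Finset.mem_insert]; aesop
      have hnot : a ∉ T' \ S := fun h => ha (Finset.mem_sdiff.mp h).1
      rw [h2, Finset.sum_insert hnot]
      have hu : (insert a S) ∪ (S ∪ T') = S ∪ insert a T' := by
        ext x; simp only [Finset.mem_union, Finset.mem_insert]; aesop
      have hi : S ⊆ (insert a S) ∩ (S ∪ T') := by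
        intro x hx; simp [Finset.mem_inter, Finset.mem_insert, Finset.mem_union]; tauto
      have := hsub (insert a S) (S ∪ T')
      rw [hu] at this
      have hS := hmono _ _ hi
      linarith

/-- Key ADT invariant: whether the threshold-greedy set `S` fills its cardinality
budget (a) or stops due to small marginal gains (b), its value is at least
`f O* / (2(1+α))` whenever the threshold `θ` sandwiches the optimum up to `1+α`. -/
theorem stmt_5 {E : Type*} [Fintype E] [DecidableEq E]
    (f : Finset E → ℝ)
    (hnonneg : ∀ S, 0 ≤ f S)
    (hmono : ∀ A B : Finset E, A ⊆ B → f A ≤ f B)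
    (hsub : ∀ A B : Finset E, f (A ∪ B) + f (A ∩ B) ≤ f A + f B)
    (hempty : f ∅ = 0) (k : ℕ) (hk : 1 ≤ k)
    (Ostar : Finset E) (hcard : Ostar.card ≤ k)
    (hopt : ∀ T : Finset E, T.card ≤ k → f T ≤ f Ostar)
    (θ α : ℝ) (hα : 0 ≤ α)
    (S : Finset E)
    (hcase :
      (S.card = k ∧ (S.card : ℝ) * θ / (2 * k) ≤ f S ∧ f Ostar ≤ (1 + α) * θ) ∨
      ((∀ e : E, e ∉ S → f (insert e S) - f S < θ / (2 * k)) ∧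
        θ ≤ f Ostar ∧ f Ostar ≤ (1 + α) * θ)) :
    f S ≥ f Ostar / (2 * (1 + α)) := by
  have hkR : (0:ℝ) < k := by exact_mod_cast hk
  have h1α : (0:ℝ) < 1 + α := by linarith
  have hO : 0 ≤ f Ostar := hnonneg _
  rcases hcase with ⟨hSk, hfS, hub⟩ | ⟨hsmall, hlb, hub⟩
  · -- case (a): f S ≥ θ/2 ≥ f O*/(2(1+α))
    have h1 : (S.card : ℝ) * θ / (2 * k) = θ / 2 := by
      rw [hSk]; field_simp
    rw [h1] at hfS
    rw [ge_iff_le, div_le_iff₀ (by linarith)]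
    nlinarith
  · -- case (b)
    have hmarg := marg_bound f hmono hsub S Ostar
    have hsum : ∑ e ∈ Ostar \ S, (f (insert e S) - f S)
        ≤ (↑(Ostar \ S).card) * (θ / (2 * k)) := by
      calc ∑ e ∈ Ostar \ S, (f (insert e S) - f S)
          ≤ ∑ _e ∈ Ostar \ S, θ / (2 * k) := by
            apply Finset.sum_le_sum
            intro e he
            exact le_of_lt (hsmall e (Finset.mem_sdiff.mp he).2)
        _ = (↑(Ostar \ S).card) * (θ / (2 * k)) := by
            rw [Finset.sum_const, nsmul_eq_mul]
    have hcardO : ((Ostar \ S).card : ℝ) ≤ k := by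
      exact_mod_cast le_trans (Finset.card_le_card (Finset.sdiff_subset)) hcard
    have hsum2 : (↑(Ostar \ S).card) * (θ / (2 * k)) ≤ f Ostar / 2 := by
      rcases le_or_gt 0 θ with hθ | hθ
      · have : (↑(Ostar \ S).card) * (θ / (2 * k)) ≤ (k:ℝ) * (θ / (2 * k)) := by
          apply mul_le_mul_of_nonneg_right hcardO
          positivity
        have hkt : (k:ℝ) * (θ / (2 * k)) = θ / 2 := by field_simp
        linarith
      · have : (↑(Ostar \ S).card) * (θ / (2 * k)) ≤ 0 := by
          apply mul_nonpos_of_nonneg_of_nonpos (by positivity)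
          apply div_nonpos_of_nonpos_of_nonneg (le_of_lt hθ) (by positivity)
        linarith
    have hOsub : f Ostar ≤ f (S ∪ Ostar) := hmono _ _ Finset.subset_union_right
    have hhalf : f Ostar / 2 ≤ f S := by linarith
    rw [ge_iff_le, div_le_iff₀ (by linarith)]
    nlinarith
end

section
/- Let f : 2^E → ℝ≥0 be monotone submodular with f(∅)=0, let O* be optimal for max{f(S) : |S| ≤ k}, ε ∈ (0,1), and let U ⊆ E with f(U ∪ {e}) − f(U) ≤ f(O*)/((1−ε)·e·k) for all e ∈ E \ U (here e denotes Euler's number). Then f(U) ≥ (1 − 1/(e(1−ε))) f(O*). -/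
/-- Ineffective-threshold case of ADT: if all marginal gains over `U` are at most
`f O* / ((1-ε)·e·k)` then `f U ≥ (1 - 1/(e(1-ε))) f O*`. -/
theorem stmt_6 {E : Type*} [Fintype E] [DecidableEq E]
    (f : Finset E → ℝ)
    (hnonneg : ∀ S, 0 ≤ f S)
    (hmono : ∀ A B : Finset E, A ⊆ B → f A ≤ f B)
    (hsub : ∀ A B : Finset E, f (A ∪ B) + f (A ∩ B) ≤ f A + f B)
    (hempty : f ∅ = 0) (k : ℕ) (hk : 1 ≤ k)
    (Ostar : Finset E) (hcard : Ostar.card ≤ k)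
    (hopt : ∀ T : Finset E, T.card ≤ k → f T ≤ f Ostar)
    (ε : ℝ) (hε : 0 < ε ∧ ε < 1)
    (U : Finset E)
    (hgain : ∀ e : E, e ∉ U →
      f (insert e U) - f U ≤ f Ostar / ((1 - ε) * Real.exp 1 * k)) :
    f U ≥ (1 - 1 / (Real.exp 1 * (1 - ε))) * f Ostar := by
  obtain ⟨hε0, hε1⟩ := hε
  have h1ε : (0:ℝ) < 1 - ε := by linarith
  have he : (0:ℝ) < Real.exp 1 := Real.exp_pos 1
  have hkpos : (0:ℝ) < (k:ℝ) := by exact_mod_cast hk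
  set B := f Ostar / ((1 - ε) * Real.exp 1 * k) with hB
  have hBnn : 0 ≤ B := by
    apply div_nonneg (hnonneg _)
    positivity
  -- main submodularity lemma
  have key : ∀ S : Finset E, f (U ∪ S) - f U ≤ ∑ a ∈ S, (f (insert a U) - f U) := by
    intro S
    induction S using Finset.induction_on with
    | empty => simp
    | insert a S haS ih =>
      rw [Finset.sum_insert haS]
      by_cases haU : a ∈ U
      · have : U ∪ insert a S = U ∪ S := by
          rw [Finset.union_insert, Finset.insert_eq_self.mpr (Finset.mem_union_left _ haU)]
        rw [this]
        have h0 : insert a U = U := Finset.insert_eq_self.mpr haU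
        rw [h0]
        linarith
      · have hsm := hsub (U ∪ S) (insert a U)
        have hAB : (U ∪ S) ∪ insert a U = U ∪ insert a S := by
          ext x
          simp [Finset.mem_insert, Finset.mem_union]
          tauto
        have hI : (U ∪ S) ∩ insert a U ⊆ U := by
          intro x hx
          simp [Finset.mem_insert, Finset.mem_union, Finset.mem_inter] at hx
          rcases hx with ⟨h1, h2⟩
          rcases h2 with rfl | h2
          · rcases h1 with h | h
            · exact absurd h haU
            · exact absurd h haS
          · exact h2
        have hI2 : U ⊆ (U ∪ S) ∩ insert a U := by
          intro x hx
          simp [Finset.mem_insert, Finset.mem_union, Finset.mem_inter]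
          tauto
        have hIeq : (U ∪ S) ∩ insert a U = U := Finset.Subset.antisymm hI hI2
        rw [hAB, hIeq] at hsm
        linarith
    done
  have hOsum := key Ostar
  have hsumle : ∑ a ∈ Ostar, (f (insert a U) - f U) ≤ (Ostar.card : ℝ) * B := by
    rw [Finset.card_eq_sum_ones, Nat.cast_sum]
    push_cast
    rw [Finset.sum_mul]
    apply Finset.sum_le_sum
    intro a _
    rw [one_mul]
    by_cases haU : a ∈ U
    · rw [Finset.insert_eq_self.mpr haU]; simpa using hBnn
    · exact hgain a haU
  have hcardB : (Ostar.card : ℝ) * B ≤ (k:ℝ) * B := by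
    apply mul_le_mul_of_nonneg_right _ hBnn
    exact_mod_cast hcard
  have hOle : f Ostar ≤ f (U ∪ Ostar) := hmono _ _ Finset.subset_union_right
  have hkB : (k:ℝ) * B = f Ostar / ((1 - ε) * Real.exp 1) := by
    rw [hB]
    field_simp
  have : f Ostar - f U ≤ f Ostar / ((1 - ε) * Real.exp 1) := by
    have := hOsum
    nlinarith [hOle, hsumle, hcardB, hkB]
  have hrw : (1 - 1 / (Real.exp 1 * (1 - ε))) * f Ostar
      = f Ostar - f Ostar / ((1 - ε) * Real.exp 1) := by
    field_simp
  rw [ge_iff_le, hrw]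
  linarith
end

section
/- Let n be even, k = n/2, and c = 1/2 + δ for a constant δ ∈ (0, 1/2]. If n^{2Q} ≥ binom(n, n/2) / (n · max_{r ≥ cn/2} binom(n/2, r)^2), then Q = Ω(n / log n). More precisely, there exists a constant C(δ) > 0 such that binom(n, n/2) / Σ_{r=⌈cn/2⌉}^{n/2} binom(n/2, r)^2 ≥ 2^{C(δ) n} for all sufficiently large n, hence Q ≥ C(δ) n / (2 log₂ n). -/
open Real Finset

private lemma choose_le_two_pow' (m r : ℕ) : (m.choose r) ≤ 2 ^ m := by
  rcases le_or_gt r m with h | h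
  · calc m.choose r ≤ ∑ i ∈ Finset.range (m + 1), m.choose i :=
        Finset.single_le_sum (fun i _ => Nat.zero_le _)
          (Finset.mem_range.2 (Nat.lt_succ_of_le h))
    _ = 2 ^ m := Nat.sum_range_choose m
  · simp [Nat.choose_eq_zero_of_lt h]

private lemma entropy_aux {a : ℝ} (ha0 : 0 < a) (ha1 : a < 1) :
    0 ≤ 1 + a * Real.logb 2 a + (1 - a) * Real.logb 2 (1 - a) := by
  have h2 : (0:ℝ) < Real.log 2 := Real.log_pos one_lt_two
  have hb := Real.binEntropy_le_log_two (p := a)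
  rw [Real.binEntropy, Real.log_inv, Real.log_inv] at hb
  have ha1' : (0:ℝ) < 1 - a := by linarith
  simp only [Real.logb]
  have : 0 ≤ (Real.log 2 + a * Real.log a + (1 - a) * Real.log (1 - a)) / Real.log 2 := by
    apply div_nonneg _ h2.le
    nlinarith
  calc (0:ℝ) ≤ (Real.log 2 + a * Real.log a + (1 - a) * Real.log (1 - a)) / Real.log 2 := this
    _ = 1 + a * (Real.log a / Real.log 2) + (1 - a) * (Real.log (1 - a) / Real.log 2) := by
        field_simp

private lemma big_n_aux {k : ℝ} (hk : 0 < k) :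
    ∃ N : ℕ, 2 ≤ N ∧ ∀ n : ℕ, N ≤ n → ((n : ℝ) + 1) ≤ (2:ℝ) ^ (k * n) := by
  have h2 : (0:ℝ) < Real.log 2 := Real.log_pos one_lt_two
  set k' : ℝ := k * Real.log 2 with hk'
  have hk'0 : 0 < k' := mul_pos hk h2
  refine ⟨max 2 ⌈8 / k' ^ 2⌉₊, le_max_left _ _, fun n hn => ?_⟩
  have hn2 : 2 ≤ n := le_trans (le_max_left _ _) hn
  have hn8 : (8 : ℝ) / k' ^ 2 ≤ n := by
    have := Nat.ceil_le.1 (le_trans (le_max_right 2 _) hn)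
    exact this
  have hnR : (2:ℝ) ≤ n := by exact_mod_cast hn2
  have hn0 : (0:ℝ) < n := by linarith
  -- log (n+1) ≤ 2 * sqrt (n+1)
  have hs0 : (0:ℝ) < (n:ℝ) + 1 := by linarith
  have hsq : Real.sqrt ((n:ℝ) + 1) ^ 2 = (n:ℝ) + 1 := Real.sq_sqrt hs0.le
  have hspos : 0 < Real.sqrt ((n:ℝ) + 1) := Real.sqrt_pos.2 hs0
  have hlog : Real.log ((n:ℝ) + 1) ≤ 2 * Real.sqrt ((n:ℝ) + 1) := by
    have h1 : Real.log ((n:ℝ) + 1) = 2 * Real.log (Real.sqrt ((n:ℝ)+1)) := by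
      conv_lhs => rw [← hsq]
      rw [Real.log_pow]; push_cast; ring
    rw [h1]
    have := Real.log_le_sub_one_of_pos hspos
    linarith
  -- 2 * sqrt (n+1) ≤ k' * n
  have hsqle : 2 * Real.sqrt ((n:ℝ) + 1) ≤ k' * n := by
    have h4 : 4 * ((n:ℝ) + 1) ≤ (k' * n) ^ 2 := by
      have h8 : 8 ≤ k' ^ 2 * n := by
        rw [div_le_iff₀ (by positivity)] at hn8
        linarith
      have : 4 * ((n:ℝ) + 1) ≤ 8 * n := by linarith
      calc 4 * ((n:ℝ) + 1) ≤ 8 * n := this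
        _ ≤ (k' ^ 2 * n) * n := by nlinarith
        _ = (k' * n) ^ 2 := by ring
    have h5 := Real.sqrt_le_sqrt h4
    rw [Real.sqrt_sq (by positivity)] at h5
    calc 2 * Real.sqrt ((n:ℝ)+1) = Real.sqrt (4 * ((n:ℝ)+1)) := by
          rw [Real.sqrt_mul (by norm_num)]
          have : Real.sqrt 4 = 2 := by
            rw [show (4:ℝ) = 2^2 by norm_num, Real.sqrt_sq (by norm_num)]
          rw [this]
      _ ≤ k' * n := h5
  have : Real.log ((n:ℝ) + 1) ≤ Real.log ((2:ℝ) ^ (k * n)) := by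
    rw [Real.log_rpow two_pos]
    calc Real.log ((n:ℝ) + 1) ≤ 2 * Real.sqrt ((n:ℝ)+1) := hlog
      _ ≤ k' * n := hsqle
      _ = k * n * Real.log 2 := by rw [hk']; ring
  exact (Real.log_le_log_iff hs0 (Real.rpow_pos_of_pos two_pos _)).1 this

/-- Counting step of the deterministic query lower bound: with `c = 1/2 + δ`,
there is `C(δ) > 0` such that for all sufficiently large even `n`,
`binom(n, n/2) / Σ_{r ≥ ⌈c·n/2⌉} binom(n/2, r)² ≥ 2^{C n}`, and hence any `Q`
with `n^{2Q} ≥ binom(n, n/2) / Σ_{r ≥ ⌈c·n/2⌉} binom(n/2, r)²` satisfies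
`Q ≥ C·n / (2 log₂ n)`, i.e. `Q = Ω(n / log n)`. -/
theorem stmt_10 (δ : ℝ) (hδ : 0 < δ ∧ δ ≤ 1 / 2) :
    ∃ C : ℝ, 0 < C ∧ ∃ N : ℕ, ∀ n : ℕ, N ≤ n → Even n →
      ((n.choose (n / 2) : ℝ) /
          (∑ r ∈ Finset.Icc ⌈(1 / 2 + δ) * ((n : ℝ) / 2)⌉₊ (n / 2),
            (((n / 2).choose r : ℝ)) ^ 2) ≥ (2 : ℝ) ^ (C * n)) ∧
      ∀ Q : ℕ,
        ((n : ℝ) ^ (2 * Q) ≥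
          (n.choose (n / 2) : ℝ) /
            (∑ r ∈ Finset.Icc ⌈(1 / 2 + δ) * ((n : ℝ) / 2)⌉₊ (n / 2),
              (((n / 2).choose r : ℝ)) ^ 2)) →
        (Q : ℝ) ≥ C * n / (2 * Real.logb 2 n) := by
  obtain ⟨hδ0, hδ2⟩ := hδ
  set c : ℝ := 1 / 2 + δ with hc_def
  set a : ℝ := 1 / 2 + δ / 2 with ha_def
  have ha0 : 0 < a := by rw [ha_def]; linarith
  have ha1 : a < 1 := by rw [ha_def]; linarith
  have ha1' : 0 < 1 - a := by linarith
  set t : ℝ := a / (1 - a) with ht_def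
  have ht0 : 0 < t := div_pos ha0 ha1'
  have ht1 : 1 < t := (one_lt_div ha1').2 (by rw [ha_def]; linarith)
  have hLt0 : 0 ≤ Real.logb 2 t := Real.logb_nonneg one_lt_two ht1.le
  have hLtpos : 0 < Real.logb 2 t := Real.logb_pos one_lt_two ht1
  set ε : ℝ := 1 + c * Real.logb 2 t - Real.logb 2 (1 + t) with hε_def
  have hεpos : 0 < ε := by
    have hlogt : Real.logb 2 t = Real.logb 2 a - Real.logb 2 (1 - a) := by
      rw [ht_def]; exact Real.logb_div ha0.ne' ha1'.ne'
    have h1t : 1 + t = (1 - a)⁻¹ := by rw [ht_def]; field_simp; ring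
    have hlog1t : Real.logb 2 (1 + t) = -Real.logb 2 (1 - a) := by
      rw [h1t, Real.logb_inv]
    have hent := entropy_aux ha0 ha1
    have heq : ε = (1 + a * Real.logb 2 a + (1 - a) * Real.logb 2 (1 - a))
        + (δ / 2) * Real.logb 2 t := by
      rw [hε_def, hlog1t, hlogt, hc_def, ha_def]; ring
    rw [heq]
    exact add_pos_of_nonneg_of_pos hent
      (mul_pos (show (0:ℝ) < δ / 2 by linarith) hLtpos)
  obtain ⟨N, hN2, hNle⟩ := big_n_aux (show (0:ℝ) < ε / 4 by linarith)
  refine ⟨ε / 4, by linarith, N, fun n hn heven => ?_⟩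
  have hn2 : 2 ≤ n := le_trans hN2 hn
  obtain ⟨m, hm⟩ := heven
  have hmn : n / 2 = m := by omega
  have hm1 : 1 ≤ m := by omega
  have hcastn : (n : ℝ) = 2 * m := by rw [hm]; push_cast; ring
  have hhalf : (n : ℝ) / 2 = (m : ℝ) := by rw [hcastn]; ring
  rw [hmn, hhalf]
  set r0 : ℕ := ⌈c * (m : ℝ)⌉₊ with hr0_def
  have hc1 : c ≤ 1 := by rw [hc_def]; linarith
  have hr0m : r0 ≤ m := by
    rw [hr0_def]
    refine Nat.ceil_le.2 ?_
    calc c * (m : ℝ) ≤ 1 * m := mul_le_mul_of_nonneg_right hc1 (Nat.cast_nonneg m)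
      _ = m := one_mul _
  have hcr0 : c * (m : ℝ) ≤ r0 := Nat.le_ceil _
  set S : ℝ := ∑ r ∈ Finset.Icc r0 m, ((m.choose r : ℝ)) ^ 2 with hS_def
  have hS1 : (1 : ℝ) ≤ S := by
    have hmem : m ∈ Finset.Icc r0 m := Finset.mem_Icc.2 ⟨hr0m, le_refl m⟩
    have := Finset.single_le_sum (f := fun r => ((m.choose r : ℝ)) ^ 2)
      (fun i _ => by positivity) hmem
    simpa using this
  have hS0 : (0 : ℝ) < S := zero_lt_one.trans_le hS1
  have htr0 : (0 : ℝ) < t ^ r0 := pow_pos ht0 r0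
  -- tail bound : S * t^r0 ≤ 2^m * (1+t)^m
  have hSle : S * t ^ r0 ≤ 2 ^ m * (1 + t) ^ m := by
    have step1 : S * t ^ r0 ≤ (2:ℝ) ^ m * ∑ r ∈ Finset.Icc r0 m, (m.choose r : ℝ) * t ^ r := by
      rw [hS_def, Finset.sum_mul, Finset.mul_sum]
      apply Finset.sum_le_sum
      intro r hr
      obtain ⟨hr1, _⟩ := Finset.mem_Icc.1 hr
      have hc2 : (m.choose r : ℝ) ≤ 2 ^ m := by exact_mod_cast choose_le_two_pow' m r
      have htr : t ^ r0 ≤ t ^ r := pow_le_pow_right₀ ht1.le hr1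
      have h1 : (m.choose r : ℝ) * t ^ r0 ≤ (m.choose r : ℝ) * t ^ r :=
        mul_le_mul_of_nonneg_left htr (Nat.cast_nonneg _)
      calc ((m.choose r : ℝ)) ^ 2 * t ^ r0 = (m.choose r : ℝ) * ((m.choose r : ℝ) * t ^ r0) := by
            ring
        _ ≤ 2 ^ m * ((m.choose r : ℝ) * t ^ r) :=
            mul_le_mul hc2 h1 (by positivity) (by positivity)
    have step2 : ∑ r ∈ Finset.Icc r0 m, (m.choose r : ℝ) * t ^ r ≤ (1 + t) ^ m := by
      have hsub : Finset.Icc r0 m ⊆ Finset.range (m + 1) := by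
        intro x hx
        rw [Finset.mem_range]
        have := (Finset.mem_Icc.1 hx).2
        omega
      calc ∑ r ∈ Finset.Icc r0 m, (m.choose r : ℝ) * t ^ r
          ≤ ∑ r ∈ Finset.range (m + 1), (m.choose r : ℝ) * t ^ r :=
            Finset.sum_le_sum_of_subset_of_nonneg hsub (fun i _ _ => by positivity)
        _ = (1 + t) ^ m := by
            rw [add_comm (1:ℝ) t, add_pow]
            simp [mul_comm]
    calc S * t ^ r0 ≤ (2:ℝ) ^ m * ∑ r ∈ Finset.Icc r0 m, (m.choose r : ℝ) * t ^ r := step1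
      _ ≤ 2 ^ m * (1 + t) ^ m := mul_le_mul_of_nonneg_left step2 (by positivity)
  -- central binomial lower bound
  have hchoose : (4:ℝ) ^ m / ((n : ℝ) + 1) ≤ (n.choose m : ℝ) := by
    have h := Nat.four_pow_le_two_mul_add_one_mul_central_binom m
    have hn2m : 2 * m = n := by omega
    rw [hn2m] at h
    have h' : (4:ℝ) ^ m ≤ ((n : ℝ) + 1) * (n.choose m : ℝ) := by exact_mod_cast h
    rw [div_le_iff₀ (by positivity), mul_comm]
    exact h'
  have hn1 : ((n:ℝ) + 1) ≤ (2:ℝ) ^ (ε / 4 * n) := hNle n hn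
  -- rpow conversions
  have e1 : ((1:ℝ) + t) ^ m = (2:ℝ) ^ ((m : ℝ) * Real.logb 2 (1 + t)) := by
    rw [mul_comm, Real.rpow_mul (by norm_num : (0:ℝ) ≤ 2), Real.rpow_natCast,
      Real.rpow_logb two_pos (by norm_num) (by linarith)]
  have e2 : (t : ℝ) ^ r0 = (2:ℝ) ^ ((r0 : ℝ) * Real.logb 2 t) := by
    rw [mul_comm, Real.rpow_mul (by norm_num : (0:ℝ) ≤ 2), Real.rpow_natCast,
      Real.rpow_logb two_pos (by norm_num) ht0]
  have e3 : ((2:ℝ)) ^ m = (2:ℝ) ^ ((m : ℝ)) := (Real.rpow_natCast 2 m).symm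
  have e4 : ((4:ℝ)) ^ m = (2:ℝ) ^ ((2 * m : ℝ)) := by
    rw [show (4:ℝ) = 2 ^ 2 by norm_num, ← pow_mul]
    rw [show ((2 * m : ℝ)) = ((2 * m : ℕ) : ℝ) by push_cast; ring, Real.rpow_natCast]
  have part1 : (n.choose m : ℝ) / S ≥ (2:ℝ) ^ (ε / 4 * n) := by
    rw [ge_iff_le, le_div_iff₀ hS0]
    have key : (2:ℝ) ^ (ε / 4 * n) * (2 ^ m * (1 + t) ^ m / t ^ r0) ≤ (n.choose m : ℝ) := by
      rw [mul_div_assoc', div_le_iff₀ htr0]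
      have lhs_eq : (2:ℝ) ^ (ε / 4 * n) * (2 ^ m * (1 + t) ^ m)
          = (2:ℝ) ^ (ε / 4 * n + m + m * Real.logb 2 (1 + t)) := by
        rw [e1, e3, Real.rpow_add two_pos, Real.rpow_add two_pos]; ring
      have rhs_ge : (2:ℝ) ^ (2 * (m:ℝ) - ε / 4 * n + c * m * Real.logb 2 t)
          ≤ (n.choose m : ℝ) * t ^ r0 := by
        have d1 : (2:ℝ) ^ (2 * (m:ℝ) - ε / 4 * n + c * m * Real.logb 2 t)
            = ((2:ℝ) ^ ((2 * m : ℝ)) / 2 ^ (ε / 4 * n)) * 2 ^ (c * m * Real.logb 2 t) := by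
          rw [Real.rpow_add two_pos, Real.rpow_sub two_pos]
        have d2 : (2:ℝ) ^ ((2 * m : ℝ)) / 2 ^ (ε / 4 * n) ≤ (4:ℝ) ^ m / ((n:ℝ) + 1) := by
          rw [e4]
          exact div_le_div_of_nonneg_left (by positivity) (by positivity) hn1
        have d3 : (2:ℝ) ^ (c * m * Real.logb 2 t) ≤ t ^ r0 := by
          rw [e2]
          exact Real.rpow_le_rpow_of_exponent_le one_le_two
            (mul_le_mul_of_nonneg_right hcr0 hLt0)
        calc (2:ℝ) ^ (2 * (m:ℝ) - ε / 4 * n + c * m * Real.logb 2 t)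
            = ((2:ℝ) ^ ((2 * m : ℝ)) / 2 ^ (ε / 4 * n)) * 2 ^ (c * m * Real.logb 2 t) := d1
          _ ≤ ((4:ℝ) ^ m / ((n:ℝ) + 1)) * (t ^ r0) :=
              mul_le_mul d2 d3 (by positivity) (by positivity)
          _ ≤ (n.choose m : ℝ) * t ^ r0 := mul_le_mul_of_nonneg_right hchoose (by positivity)
      have hexp : ε / 4 * (n:ℝ) + m + m * Real.logb 2 (1 + t)
          = 2 * (m:ℝ) - ε / 4 * n + c * m * Real.logb 2 t := by
        rw [hε_def, hcastn]; ring
      rw [lhs_eq, hexp]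
      exact rhs_ge
    have hB : S ≤ 2 ^ m * (1 + t) ^ m / t ^ r0 := by
      rw [le_div_iff₀ htr0]; exact hSle
    calc (2:ℝ) ^ (ε / 4 * n) * S ≤ (2:ℝ) ^ (ε / 4 * n) * (2 ^ m * (1 + t) ^ m / t ^ r0) :=
          mul_le_mul_of_nonneg_left hB (by positivity)
      _ ≤ (n.choose m : ℝ) := key
  refine ⟨part1, fun Q hQ => ?_⟩
  have h1 : (2:ℝ) ^ (ε / 4 * (n:ℝ)) ≤ (n:ℝ) ^ (2 * Q) := le_trans part1 hQ
  have hn1R : (1:ℝ) < n := by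
    have : (2:ℝ) ≤ n := by exact_mod_cast hn2
    linarith
  have hlogb : Real.logb 2 ((2:ℝ) ^ (ε / 4 * (n:ℝ))) ≤ Real.logb 2 ((n:ℝ) ^ (2 * Q)) :=
    Real.logb_le_logb_of_le one_lt_two (Real.rpow_pos_of_pos two_pos _) h1
  rw [Real.logb_rpow two_pos (by norm_num), Real.logb_pow] at hlogb
  have hlogn : 0 < Real.logb 2 n := Real.logb_pos one_lt_two hn1R
  rw [ge_iff_le, div_le_iff₀ (by positivity)]
  push_cast at hlogb
  linarith
end

section
/- Let f : 2^E → ℝ≥0 be monotone submodular, let S = {e₁,…,e_s} be built by adding elements in order with f(S^(j)) − f(S^(j−1)) ≥ ρ·c(e_j) for each j (where S^(j) = {e₁,…,e_j}, c : E → ℝ≥0), and let S̃ = {e_{i₁},…,e_{i_{s'}}} ⊆ S with i₁ < i₂ < … < i_{s'}. Then f(S̃) ≥ ρ · Σ_{j=1}^{s'} c(e_{i_j}). -/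
/-- Backtracking-threshold lemma: if `S = {e₁, …, e_s}` was built with each step
gaining at least `ρ · c(e_j)`, then any subsequence `S̃ = {e_{i₁}, …, e_{i_{s'}}}`
(with `i₁ < … < i_{s'}`) satisfies `f S̃ ≥ ρ · Σ_j c(e_{i_j})`. -/
theorem stmt_16 {E : Type*} [DecidableEq E]
    (f : Finset E → ℝ)
    (hmono : ∀ A B : Finset E, A ⊆ B → f A ≤ f B)
    (hsub : ∀ A B : Finset E, f (A ∪ B) + f (A ∩ B) ≤ f A + f B)
    (hempty : f ∅ = 0)
    (c : E → ℝ) (hc : ∀ e, 0 ≤ c e) (ρ : ℝ) (hρ : 0 ≤ ρ)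
    (s s' : ℕ) (e : ℕ → E) (idx : ℕ → ℕ)
    (hidx : StrictMono idx)
    (hrange : ∀ j, 1 ≤ j → j ≤ s' → 1 ≤ idx j ∧ idx j ≤ s)
    (hstep : ∀ j, 1 ≤ j → j ≤ s →
      f ((Finset.Icc 1 j).image e) - f ((Finset.Icc 1 (j - 1)).image e) ≥ ρ * c (e j)) :
    f ((Finset.Icc 1 s').image (fun t => e (idx t))) ≥
      ρ * ∑ j ∈ Finset.Icc 1 s', c (e (idx j)) := by
  induction s' with
  | zero => simp [hempty]
  | succ n ih =>
    have hrange' : ∀ j, 1 ≤ j → j ≤ n → 1 ≤ idx j ∧ idx j ≤ s :=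
      fun j h1 h2 => hrange j h1 (by omega)
    have hX := ih hrange'
    set X := (Finset.Icc 1 n).image (fun t => e (idx t)) with hXdef
    have hk := hrange (n+1) (by omega) le_rfl
    set k := idx (n+1) with hkdef
    set x := e k with hxdef
    set Sk1 := (Finset.Icc 1 (k-1)).image e with hSk1def
    set Sk := (Finset.Icc 1 k).image e with hSkdef
    have hXsub : X ⊆ Sk1 := by
      intro y hy
      simp only [hXdef, hSk1def, Finset.mem_image, Finset.mem_Icc] at hy ⊢
      obtain ⟨t, ⟨ht1, ht2⟩, rfl⟩ := hy
      have hlt := hidx (show t < n+1 by omega)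
      exact ⟨idx t, ⟨(hrange' t ht1 ht2).1, by omega⟩, rfl⟩
    have hIcck : Finset.Icc 1 k = insert k (Finset.Icc 1 (k-1)) := by
      ext y
      simp only [Finset.mem_Icc, Finset.mem_insert]
      omega
    have hSkeq : Sk = insert x Sk1 := by
      rw [hSkdef, hIcck, Finset.image_insert, ← hSk1def, ← hxdef]
    have hIccn : Finset.Icc 1 (n+1) = insert (n+1) (Finset.Icc 1 n) := by
      ext y
      simp only [Finset.mem_Icc, Finset.mem_insert]
      omega
    have hgoalset : (Finset.Icc 1 (n+1)).image (fun t => e (idx t)) = insert x X := by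
      rw [hIccn, Finset.image_insert]
    have hunion : (insert x X) ∪ Sk1 = Sk := by
      rw [hSkeq, Finset.insert_union, Finset.union_eq_right.mpr hXsub]
    have hsubm := hsub (insert x X) Sk1
    rw [hunion] at hsubm
    have hinter : X ⊆ (insert x X) ∩ Sk1 :=
      Finset.subset_inter (Finset.subset_insert _ _) hXsub
    have hmX : f X ≤ f ((insert x X) ∩ Sk1) := hmono _ _ hinter
    have hstepk := hstep k hk.1 hk.2
    have hsum : ∑ j ∈ Finset.Icc 1 (n+1), c (e (idx j))
        = (∑ j ∈ Finset.Icc 1 n, c (e (idx j))) + c x := by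
      rw [← Finset.sum_Icc_succ_top (by omega : 1 ≤ n+1)]
    rw [hgoalset, hsum, mul_add]
    have : f Sk - f Sk1 ≥ ρ * c x := hstepk
    linarith
end

section
/- Let f : 2^E → ℝ≥0 be monotone submodular, d ≥ 1, C_i : E → ℝ≥0 nonneg. cost functions, O* ⊆ E with Σ_{e∈O*} C_i(e) ≤ 1 for all i, O*_b ⊆ O* the set of elements e with Σ_{i=1}^d C_i(e) > 1/2 (big elements of O*), and S ⊆ E a set such that f(S∪{e}) − f(S) ≤ θ·Σ_{i=1}^d C_i(e) for every e ∈ O* \ (O*_b ∪ S). Then f(S ∪ (O* \ O*_b)) − f(S) ≤ θ·(d − |O*_b|/2). -/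
lemma marg_sum {E : Type*} [DecidableEq E]
    (f : Finset E → ℝ)
    (hmono : ∀ A B : Finset E, A ⊆ B → f A ≤ f B)
    (hsub : ∀ A B : Finset E, f (A ∪ B) + f (A ∩ B) ≤ f A + f B)
    (S T : Finset E) :
    f (S ∪ T) - f S ≤ ∑ e ∈ T, (f (insert e S) - f S) := by
  induction T using Finset.induction_on with
  | empty => simp
  | @insert a s ha ih =>
    rw [Finset.sum_insert ha]
    have h1 : insert a S ∪ (S ∪ s) = S ∪ insert a s := by
      ext x; simp
    have h2 : f S ≤ f (insert a S ∩ (S ∪ s)) := by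
      apply hmono
      intro x hx
      simp [Finset.mem_insert.mpr (Or.inr hx), hx]
    have h3 := hsub (insert a S) (S ∪ s)
    rw [h1] at h3
    linarith

/-- Loss bound in the backtracking-threshold analysis: if every element of
`O* \ (O*_b ∪ S)` has marginal gain over `S` at most `θ · Σ_i C_i(e)`, then
`f (S ∪ (O* \ O*_b)) - f S ≤ θ (d - |O*_b|/2)`. -/
theorem stmt_19 {E : Type*} [DecidableEq E]
    (f : Finset E → ℝ)
    (hnonneg : ∀ S, 0 ≤ f S)
    (hmono : ∀ A B : Finset E, A ⊆ B → f A ≤ f B)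
    (hsub : ∀ A B : Finset E, f (A ∪ B) + f (A ∩ B) ≤ f A + f B)
    (d : ℕ) (hd : 1 ≤ d)
    (C : Fin d → E → ℝ) (hC : ∀ i e, 0 ≤ C i e)
    (Ostar : Finset E) (hbudget : ∀ i : Fin d, ∑ e ∈ Ostar, C i e ≤ 1)
    (Ob : Finset E) (hObsub : Ob ⊆ Ostar)
    (hOb : ∀ e ∈ Ostar, (e ∈ Ob ↔ 1 / 2 < ∑ i : Fin d, C i e))
    (θ : ℝ) (hθ : 0 ≤ θ)
    (S : Finset E)
    (hgain : ∀ e ∈ Ostar \ (Ob ∪ S),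
      f (insert e S) - f S ≤ θ * ∑ i : Fin d, C i e) :
    f (S ∪ (Ostar \ Ob)) - f S ≤ θ * ((d : ℝ) - (Ob.card : ℝ) / 2) := by
  have step1 := marg_sum f hmono hsub S (Ostar \ Ob)
  have step2 : ∑ e ∈ Ostar \ Ob, (f (insert e S) - f S)
      ≤ ∑ e ∈ Ostar \ Ob, θ * ∑ i : Fin d, C i e := by
    apply Finset.sum_le_sum
    intro e he
    rcases Finset.mem_sdiff.mp he with ⟨heO, heOb⟩
    by_cases hs : e ∈ S
    · rw [Finset.insert_eq_self.mpr hs]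
      simp only [sub_self]
      exact mul_nonneg hθ (Finset.sum_nonneg fun i _ => hC i e)
    · exact hgain e (by simp [heO, heOb, hs])
  have step3 : ∑ e ∈ Ostar \ Ob, θ * ∑ i : Fin d, C i e
      ≤ θ * ((d : ℝ) - (Ob.card : ℝ) / 2) := by
    rw [← Finset.mul_sum]
    apply mul_le_mul_of_nonneg_left _ hθ
    have hsplit : ∑ e ∈ Ostar \ Ob, ∑ i : Fin d, C i e
        = ∑ e ∈ Ostar, ∑ i : Fin d, C i e - ∑ e ∈ Ob, ∑ i : Fin d, C i e := by
      rw [eq_sub_iff_add_eq, Finset.sum_sdiff hObsub]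
    have hup : ∑ e ∈ Ostar, ∑ i : Fin d, C i e ≤ (d : ℝ) := by
      rw [Finset.sum_comm]
      calc ∑ i : Fin d, ∑ e ∈ Ostar, C i e ≤ ∑ _i : Fin d, (1 : ℝ) :=
            Finset.sum_le_sum fun i _ => hbudget i
        _ = (d : ℝ) := by simp
    have hlow : (Ob.card : ℝ) / 2 ≤ ∑ e ∈ Ob, ∑ i : Fin d, C i e := by
      calc (Ob.card : ℝ) / 2 = ∑ _e ∈ Ob, (1 / 2 : ℝ) := by
            rw [Finset.sum_const, nsmul_eq_mul]; ring
        _ ≤ _ := Finset.sum_le_sum fun e he =>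
            le_of_lt ((hOb e (hObsub he)).mp he)
    linarith
  linarith
end
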